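/- Let A : H ⇉ H be an α-comonotone set-valued operator on a real Hilbert space H, where α ∈ ℝ, and let γ > 0 satisfy γ + α > 0. Then the domain of the resolvent J_{γA} := (Id + γA)^{-1} is all of H if and only if A is maximally α-comonotone. -/

import Mathlib

open scoped InnerProductSpace Pointwise

section AuxKirszbraun

open Finset Metric

variable {H : Type*} [NormedAddCommGroup H] [InnerProductSpace ℝ H]

lemma double_sum_identity (J : Finset H) (w : H → ℝ) (φ : H → H)
    (hw1 : ∑ y ∈ J, w y = 1) :
    ∑ x ∈ J, ∑ y ∈ J, w x * w y * ‖φ x - φ y‖ ^ 2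
      = 2 * ∑ y ∈ J, w y * ‖φ y‖ ^ 2 - 2 * ‖∑ y ∈ J, w y • φ y‖ ^ 2 := by
  set V := ∑ y ∈ J, w y • φ y with hV
  set Q := ∑ y ∈ J, w y * ‖φ y‖ ^ 2 with hQ
  have key : ∀ x ∈ J, ∑ y ∈ J, w x * w y * ‖φ x - φ y‖ ^ 2
      = w x * ‖φ x‖ ^ 2 + w x * Q - 2 * ⟪w x • φ x, V⟫_ℝ := by
    intro x hx
    have h2 : ⟪w x • φ x, V⟫_ℝ = ∑ y ∈ J, w x * w y * ⟪φ x, φ y⟫_ℝ := by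
      rw [hV, inner_sum]
      refine Finset.sum_congr rfl fun y hy => ?_
      rw [real_inner_smul_left, real_inner_smul_right]; ring
    calc ∑ y ∈ J, w x * w y * ‖φ x - φ y‖ ^ 2
        = ∑ y ∈ J, (w y * (w x * ‖φ x‖ ^ 2) + w x * (w y * ‖φ y‖ ^ 2)
            - 2 * (w x * w y * ⟪φ x, φ y⟫_ℝ)) := by
          refine Finset.sum_congr rfl fun y hy => ?_
          rw [norm_sub_sq_real]; ring
      _ = (∑ y ∈ J, w y) * (w x * ‖φ x‖ ^ 2) + w x * Q - 2 * ⟪w x • φ x, V⟫_ℝ := by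
          rw [Finset.sum_sub_distrib, Finset.sum_add_distrib, ← Finset.sum_mul, hQ,
            Finset.mul_sum, h2, Finset.mul_sum]
      _ = w x * ‖φ x‖ ^ 2 + w x * Q - 2 * ⟪w x • φ x, V⟫_ℝ := by rw [hw1]; ring
  rw [Finset.sum_congr rfl key, Finset.sum_sub_distrib, Finset.sum_add_distrib,
    ← Finset.sum_mul, hw1, ← hQ, ← Finset.mul_sum, ← sum_inner, ← hV,
    real_inner_self_eq_norm_sq]
  ring

lemma exists_ball_inter_finite [CompleteSpace H] (L : ℝ) (hL : 0 ≤ L) (z : H) (c : H → H)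
    (F : Finset H) (hc : ∀ s ∈ F, ∀ t ∈ F, ‖c s - c t‖ ≤ L * ‖s - t‖) :
    ∃ v : H, ∀ s ∈ F, ‖v - c s‖ ≤ L * ‖z - s‖ := by
  classical
  rcases F.eq_empty_or_nonempty with rfl | hF
  · exact ⟨0, by simp⟩
  set φ : H → H → ℝ := fun s v => ‖v - c s‖ ^ 2 - (L * ‖z - s‖) ^ 2 with hφdef
  have hφcont : ∀ s : H, Continuous (φ s) := fun s =>
    ((continuous_id.sub continuous_const).norm.pow 2).sub continuous_const
  have hcont : Continuous fun v => F.sup' hF fun s => φ s v := by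
    rw [continuous_iff_continuousAt]
    intro x
    exact Filter.Tendsto.finset_sup'_nhds_apply hF fun i _ => (hφcont i).tendsto x
  set Kset : Set H := convexHull ℝ (↑(F.image c) : Set H) with hKset
  have hKcv : Convex ℝ Kset := convex_convexHull _ _
  have hKcp : IsCompact Kset := (F.image c).finite_toSet.isCompact_convexHull ℝ
  have hKne : Kset.Nonempty := by
    obtain ⟨s, hs⟩ := hF
    exact ⟨c s, subset_convexHull _ _ (by simpa using ⟨s, hs, rfl⟩)⟩
  obtain ⟨v₀, hv₀K, hmin⟩ := hKcp.exists_isMinOn hKne hcont.continuousOn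
  set μ := F.sup' hF fun s => φ s v₀ with hμdef
  -- reduce to μ ≤ 0
  suffices hμ : μ ≤ 0 by
    refine ⟨v₀, fun s hs => ?_⟩
    have h1 : φ s v₀ ≤ μ := Finset.le_sup' (fun s => φ s v₀) hs
    have h2 : ‖v₀ - c s‖ ^ 2 ≤ (L * ‖z - s‖) ^ 2 := by
      have := h1.trans hμ; simp only [hφdef] at this; linarith
    exact (pow_le_pow_iff_left₀ (norm_nonneg _)
      (mul_nonneg hL (norm_nonneg _)) two_ne_zero).1 h2
  set I : Finset H := F.filter (fun s => φ s v₀ = μ) with hIdef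
  have hIF : I ⊆ F := Finset.filter_subset _ _
  have hIne : I.Nonempty := by
    obtain ⟨s, hs, hseq⟩ := Finset.exists_mem_eq_sup' hF fun s => φ s v₀
    exact ⟨s, Finset.mem_filter.2 ⟨hs, hseq.symm⟩⟩
  -- step (a): v₀ is in the convex hull of the active centers
  have hv₀mem : v₀ ∈ convexHull ℝ (↑(I.image c) : Set H) := by
    by_contra hnot
    set C' : Set H := convexHull ℝ (↑(I.image c) : Set H) with hC'
    have hC'cv : Convex ℝ C' := convex_convexHull _ _
    have hC'cp : IsCompact C' := (I.image c).finite_toSet.isCompact_convexHull ℝ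
    have hC'ne : C'.Nonempty := by
      obtain ⟨s, hs⟩ := hIne
      exact ⟨c s, subset_convexHull _ _ (by simpa using ⟨s, hs, rfl⟩)⟩
    obtain ⟨P, hPC, hPdist⟩ := exists_norm_eq_iInf_of_complete_convex hC'ne
      (hC'cp.isClosed.isComplete) hC'cv v₀
    have hVI : ∀ q ∈ C', ⟪v₀ - P, q - P⟫_ℝ ≤ 0 :=
      (norm_eq_iInf_iff_real_inner_le_zero hC'cv hPC).1 hPdist
    set u : H := P - v₀ with hu
    have hune : u ≠ 0 := by
      intro h
      exact hnot (sub_eq_zero.1 h ▸ hPC)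
    have hupos : 0 < ‖u‖ ^ 2 := pow_pos (norm_pos_iff.mpr hune) 2
    have hinner : ∀ s ∈ I, ‖u‖ ^ 2 ≤ ⟪u, c s - v₀⟫_ℝ := by
      intro s hs
      have hq : c s ∈ C' := subset_convexHull _ _ (by simpa using ⟨s, hs, rfl⟩)
      have h1 : ⟪v₀ - P, c s - P⟫_ℝ ≤ 0 := hVI _ hq
      have h2 : ⟪u, c s - P⟫_ℝ ≥ 0 := by
        rw [hu, ← neg_sub v₀ P, inner_neg_left]; linarith
      have h3 : ⟪u, c s - v₀⟫_ℝ = ⟪u, c s - P⟫_ℝ + ⟪u, u⟫_ℝ := by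
        rw [← inner_add_right, hu]; congr 1; abel
      rw [h3, real_inner_self_eq_norm_sq]; linarith
    -- choose the step size
    set τ : H → ℝ := fun s => if φ s v₀ = μ then 1
      else (μ - φ s v₀) / (2 * |⟪u, c s - v₀⟫_ℝ| + ‖u‖ ^ 2) with hτ
    have hτpos : ∀ s ∈ F, 0 < τ s := by
      intro s hs
      rw [hτ]
      dsimp only
      split_ifs with h
      · norm_num
      · have h1 : φ s v₀ < μ := lt_of_le_of_ne (Finset.le_sup' (fun s => φ s v₀) hs) h
        have h2 : 0 < 2 * |⟪u, c s - v₀⟫_ℝ| + ‖u‖ ^ 2 := by positivity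
        exact div_pos (by linarith) h2
    set t : ℝ := min 1 (F.inf' hF τ) / 2 with ht
    have ht0 : 0 < t := by
      rw [ht]
      have : 0 < min 1 (F.inf' hF τ) :=
        lt_min one_pos ((Finset.lt_inf'_iff _).2 hτpos)
      linarith
    have ht1 : t < 1 := by
      rw [ht]
      have : min 1 (F.inf' hF τ) ≤ 1 := min_le_left _ _
      linarith
    -- the perturbed point
    have hmemK : v₀ + t • u ∈ Kset := by
      have hPK : P ∈ Kset := by
        refine convexHull_mono ?_ hPC
        exact_mod_cast Finset.coe_subset.2 (Finset.image_subset_image hIF)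
      have := hKcv hv₀K hPK (by linarith : (0:ℝ) ≤ 1 - t) (le_of_lt ht0) (by ring)
      convert this using 1
      rw [hu]
      module
    have hφt : ∀ s ∈ F, φ s (v₀ + t • u) = φ s v₀ - 2 * t * ⟪u, c s - v₀⟫_ℝ
        + t ^ 2 * ‖u‖ ^ 2 := by
      intro s hs
      have : v₀ + t • u - c s = (v₀ - c s) + t • u := by abel
      simp only [hφdef, this, norm_add_sq_real, real_inner_smul_right, norm_smul,
        Real.norm_eq_abs, mul_pow, sq_abs]
      have : ⟪v₀ - c s, u⟫_ℝ = - ⟪u, c s - v₀⟫_ℝ := by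
        rw [← neg_sub (c s) v₀, inner_neg_left, real_inner_comm]
      rw [this]; ring
    have hlt : ∀ s ∈ F, φ s (v₀ + t • u) < μ := by
      intro s hs
      rw [hφt s hs]
      by_cases hact : φ s v₀ = μ
      · have h1 : ‖u‖ ^ 2 ≤ ⟪u, c s - v₀⟫_ℝ :=
          hinner s (Finset.mem_filter.2 ⟨hs, hact⟩)
        have h2 : t ^ 2 * ‖u‖ ^ 2 < t * ‖u‖ ^ 2 := by
          have : t ^ 2 < t := by nlinarith
          exact mul_lt_mul_of_pos_right this hupos
        nlinarith
      · have h1 : φ s v₀ < μ := lt_of_le_of_ne (Finset.le_sup' (fun s => φ s v₀) hs) hact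
        have hden : 0 < 2 * |⟪u, c s - v₀⟫_ℝ| + ‖u‖ ^ 2 := by positivity
        have htτ : t ≤ τ s / 2 := by
          rw [ht]
          have h3 : min 1 (F.inf' hF τ) ≤ τ s := le_trans (min_le_right _ _)
            (Finset.inf'_le _ hs)
          linarith
        have hτval : τ s = (μ - φ s v₀) / (2 * |⟪u, c s - v₀⟫_ℝ| + ‖u‖ ^ 2) := by
          rw [hτ]; exact if_neg hact
        have h4 : t * (2 * |⟪u, c s - v₀⟫_ℝ| + ‖u‖ ^ 2) ≤ (μ - φ s v₀) / 2 := by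
          have := mul_le_mul_of_nonneg_right htτ (le_of_lt hden)
          rw [hτval] at this
          calc t * (2 * |⟪u, c s - v₀⟫_ℝ| + ‖u‖ ^ 2)
              ≤ (μ - φ s v₀) / (2 * |⟪u, c s - v₀⟫_ℝ| + ‖u‖ ^ 2) / 2
                * (2 * |⟪u, c s - v₀⟫_ℝ| + ‖u‖ ^ 2) := this
            _ = (μ - φ s v₀) / 2 := by field_simp
        have h5 : - 2 * t * ⟪u, c s - v₀⟫_ℝ ≤ 2 * t * |⟪u, c s - v₀⟫_ℝ| := by
          have := neg_abs_le ⟪u, c s - v₀⟫_ℝ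
          nlinarith [ht0.le]
        have ht2 : t ^ 2 ≤ t := by nlinarith
        have h6 : t ^ 2 * ‖u‖ ^ 2 ≤ t * ‖u‖ ^ 2 :=
          mul_le_mul_of_nonneg_right ht2 (le_of_lt hupos)
        have h4' : 2 * t * |⟪u, c s - v₀⟫_ℝ| + t * ‖u‖ ^ 2 ≤ (μ - φ s v₀) / 2 := by
          have hexp : t * (2 * |⟪u, c s - v₀⟫_ℝ| + ‖u‖ ^ 2)
              = 2 * t * |⟪u, c s - v₀⟫_ℝ| + t * ‖u‖ ^ 2 := by ring
          linarith [h4, hexp.symm.le, hexp.le]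
        calc φ s v₀ - 2 * t * ⟪u, c s - v₀⟫_ℝ + t ^ 2 * ‖u‖ ^ 2
            ≤ φ s v₀ + (2 * t * |⟪u, c s - v₀⟫_ℝ| + t * ‖u‖ ^ 2) := by
              linarith [h5, h6]
          _ ≤ φ s v₀ + (μ - φ s v₀) / 2 := by linarith [h4']
          _ < μ := by clear_value φ μ; linarith [h1]
    have h7 : (F.sup' hF fun s => φ s (v₀ + t • u)) < μ :=
      (Finset.sup'_lt_iff hF).2 hlt
    have h8 : μ ≤ F.sup' hF fun s => φ s (v₀ + t • u) := hmin hmemK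
    linarith
  -- step (b): derive μ ≤ 0 from the convex combination
  obtain ⟨w, hw0, hw1, hwc⟩ := Finset.mem_convexHull.1 hv₀mem
  set J := I.image c with hJ
  have hv₀eq : v₀ = ∑ y ∈ J, w y • y := by
    rw [← hwc, Finset.centerMass_eq_of_sum_1 _ _ hw1]
    simp
  have hpre : ∀ y ∈ J, ∃ s, s ∈ I ∧ c s = y := by
    intro y hy
    simpa using Finset.mem_image.1 hy
  choose! g hgI hgc using hpre
  have hzero : ∑ y ∈ J, w y • (y - v₀) = 0 := by
    simp only [smul_sub]
    rw [Finset.sum_sub_distrib, ← Finset.sum_smul, hw1, one_smul, ← hv₀eq, sub_self]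
  have hid1 := double_sum_identity J w (fun y => y - v₀) hw1
  simp only [sub_sub_sub_cancel_right, hzero, norm_zero] at hid1
  norm_num at hid1
  -- hid1 : ∑∑ w w ‖x - y‖² = 2 ∑ w ‖y - v₀‖²
  have hid2 := double_sum_identity J w (fun y => g y - z) hw1
  simp only [sub_sub_sub_cancel_right] at hid2
  have hactive : ∀ y ∈ J, ‖y - v₀‖ ^ 2 = μ + L ^ 2 * ‖g y - z‖ ^ 2 := by
    intro y hy
    have h1 : g y ∈ I := hgI y hy
    have h2 : φ (g y) v₀ = μ := (Finset.mem_filter.1 h1).2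
    have h3 : c (g y) = y := hgc y hy
    simp only [hφdef] at h2
    rw [h3, mul_pow] at h2
    rw [norm_sub_rev y v₀, norm_sub_rev (g y) z]
    linarith
  have hsum1 : ∑ y ∈ J, w y * ‖y - v₀‖ ^ 2
      = μ + ∑ y ∈ J, w y * (L ^ 2 * ‖g y - z‖ ^ 2) := by
    rw [Finset.sum_congr rfl fun y hy => by rw [hactive y hy]]
    simp only [mul_add]
    rw [Finset.sum_add_distrib, ← Finset.sum_mul, hw1, one_mul]
  have hLip : ∑ x ∈ J, ∑ y ∈ J, w x * w y * ‖x - y‖ ^ 2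
      ≤ ∑ x ∈ J, ∑ y ∈ J, w x * w y * (L ^ 2 * ‖g x - g y‖ ^ 2) := by
    refine Finset.sum_le_sum fun x hx => Finset.sum_le_sum fun y hy => ?_
    have h1 : ‖x - y‖ ≤ L * ‖g x - g y‖ := by
      have := hc (g x) (hIF (hgI x hx)) (g y) (hIF (hgI y hy))
      rwa [hgc x hx, hgc y hy] at this
    have h2 : ‖x - y‖ ^ 2 ≤ (L * ‖g x - g y‖) ^ 2 :=
      pow_le_pow_left₀ (norm_nonneg _) h1 2
    rw [mul_pow] at h2
    exact mul_le_mul_of_nonneg_left h2 (mul_nonneg (hw0 x hx) (hw0 y hy))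
  have hid2' : ∑ x ∈ J, ∑ y ∈ J, w x * w y * (L ^ 2 * ‖g x - g y‖ ^ 2)
      = L ^ 2 * (2 * ∑ y ∈ J, w y * ‖g y - z‖ ^ 2
        - 2 * ‖∑ y ∈ J, w y • (g y - z)‖ ^ 2) := by
    rw [← hid2, Finset.mul_sum]
    refine Finset.sum_congr rfl fun x hx => ?_
    rw [Finset.mul_sum]
    exact Finset.sum_congr rfl fun y hy => by ring
  have hmulsum : L ^ 2 * ∑ y ∈ J, w y * ‖g y - z‖ ^ 2
      = ∑ y ∈ J, w y * (L ^ 2 * ‖g y - z‖ ^ 2) := by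
    rw [Finset.mul_sum]
    exact Finset.sum_congr rfl fun y hy => by ring
  have hnn : 0 ≤ L ^ 2 * ‖∑ y ∈ J, w y • (g y - z)‖ ^ 2 := by positivity
  clear_value μ φ
  nlinarith [hid1, hLip, hid2', hmulsum, hsum1, hnn]

set_option maxHeartbeats 2000000 in
lemma exists_ball_inter [CompleteSpace H] (c : H → H) (r : H → ℝ) (S : Set H)
    (hfin : ∀ F : Finset H, ↑F ⊆ S → ∃ v : H, ∀ s ∈ F, ‖v - c s‖ ≤ r s) :
    ∃ v : H, ∀ s ∈ S, ‖v - c s‖ ≤ r s := by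
  classical
  rcases S.eq_empty_or_nonempty with rfl | ⟨s₀, hs₀⟩
  · exact ⟨0, by simp⟩
  have hE : ∀ n : ℕ, 0 < (1 : ℝ)/(n+1) := fun n => by positivity
  have hE1 : ∀ n : ℕ, (1 : ℝ)/(n+1) ≤ 1 := fun n => by
    rw [div_le_one (by positivity)]; norm_num
  obtain ⟨p, hp⟩ : ∃ p : H, p = c s₀ := ⟨_, rfl⟩
  obtain ⟨K, hKmem⟩ : ∃ K : Finset H → Set H,
      ∀ (F : Finset H) (v : H), v ∈ K F ↔ ∀ s ∈ F, ‖v - c s‖ ≤ r s :=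
    ⟨fun F => ⋂ s ∈ F, Metric.closedBall (c s) (r s), fun F v => by
      simp [Metric.mem_closedBall, dist_eq_norm]⟩
  have hKconv : ∀ F, Convex ℝ (K F) := by
    intro F x hx y hy a b ha hb hab
    rw [hKmem] at hx hy ⊢
    intro s hs
    have h1 : a • x + b • y - c s = a • (x - c s) + b • (y - c s) := by
      have h0 : a • (x - c s) + b • (y - c s) = a • x + b • y - (a+b) • c s := by
        module
      rw [h0, hab, one_smul]
    rw [h1]
    calc ‖a • (x - c s) + b • (y - c s)‖ ≤ ‖a • (x - c s)‖ + ‖b • (y - c s)‖ :=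
          norm_add_le _ _
      _ = a * ‖x - c s‖ + b * ‖y - c s‖ := by
          rw [norm_smul, norm_smul, Real.norm_eq_abs, Real.norm_eq_abs,
            abs_of_nonneg ha, abs_of_nonneg hb]
      _ ≤ a * r s + b * r s := by
          have := hx s hs; have := hy s hs
          have h2 : a * ‖x - c s‖ ≤ a * r s := mul_le_mul_of_nonneg_left (hx s hs) ha
          have h3 : b * ‖y - c s‖ ≤ b * r s := mul_le_mul_of_nonneg_left (hy s hs) hb
          linarith
      _ = r s := by rw [← add_mul, hab, one_mul]
  have hKanti : ∀ F G : Finset H, F ⊆ G → K G ⊆ K F := by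
    intro F G hFG v hv
    rw [hKmem] at hv ⊢
    exact fun s hs => hv s (hFG hs)
  have hKne : ∀ F : Finset H, ↑F ⊆ S → ∃ v ∈ K F, dist p v ≤ r s₀ := by
    intro F hFS
    obtain ⟨v, hv⟩ := hfin (insert s₀ F)
      (by rw [Finset.coe_insert]; exact Set.insert_subset hs₀ hFS)
    refine ⟨v, (hKmem F v).2 fun s hs => hv s (Finset.mem_insert_of_mem hs), ?_⟩
    rw [dist_eq_norm', hp]
    exact hv s₀ (Finset.mem_insert_self _ _)
  obtain ⟨d, hd⟩ : ∃ d : Finset H → ℝ, ∀ F, d F = Metric.infDist p (K F) :=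
    ⟨_, fun _ => rfl⟩
  have hdnonneg : ∀ F, 0 ≤ d F := fun F => (hd F) ▸ Metric.infDist_nonneg
  have hdle : ∀ F : Finset H, ↑F ⊆ S → d F ≤ r s₀ := by
    intro F hFS
    obtain ⟨v, hvK, hvd⟩ := hKne F hFS
    rw [hd]
    exact le_trans (Metric.infDist_le_dist_of_mem hvK) hvd
  have hdmono : ∀ F G : Finset H, F ⊆ G → ↑G ⊆ S → d F ≤ d G := by
    intro F G hFG hGS
    obtain ⟨v, hvK, _⟩ := hKne G hGS
    rw [hd, hd]
    exact Metric.infDist_le_infDist_of_subset (hKanti F G hFG) ⟨v, hvK⟩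
  obtain ⟨dstar, hdstar⟩ : ∃ x : ℝ, x = sSup (d '' {F : Finset H | ↑F ⊆ S}) := ⟨_, rfl⟩
  have hDne : (d '' {F : Finset H | ↑F ⊆ S}).Nonempty := ⟨d ∅, ⟨∅, by simp, rfl⟩⟩
  have hDbdd : BddAbove (d '' {F : Finset H | ↑F ⊆ S}) := by
    refine ⟨r s₀, ?_⟩
    rintro x ⟨F, hF, rfl⟩
    exact hdle F hF
  have hdstar_le : ∀ F : Finset H, ↑F ⊆ S → d F ≤ dstar :=
    fun F hF => hdstar ▸ le_csSup hDbdd ⟨F, hF, rfl⟩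
  have hdstar0 : 0 ≤ dstar := le_trans (hdnonneg ∅) (hdstar_le ∅ (by simp))
  -- choose finite sets approximating the sup
  have hFn : ∀ n : ℕ, ∃ F : Finset H, ↑F ⊆ S ∧ dstar - 1/(n+1) < d F := by
    intro n
    have hlt : dstar - 1/(n+1) < dstar := sub_lt_self _ (hE n)
    rw [hdstar] at hlt
    obtain ⟨x, ⟨F, hF, rfl⟩, hx⟩ := exists_lt_of_lt_csSup hDne hlt
    exact ⟨F, hF, by rw [hdstar]; exact hx⟩
  choose Fn hFnS hFnlt using hFn
  obtain ⟨G, hG⟩ : ∃ G : ℕ → Finset H, ∀ n, G n = (Finset.range (n+1)).biUnion Fn :=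
    ⟨_, fun _ => rfl⟩
  have hGS : ∀ n, ↑(G n) ⊆ S := by
    intro n x hx
    rw [hG] at hx
    simp only [Finset.coe_biUnion, Set.mem_iUnion, Finset.mem_coe] at hx
    obtain ⟨k, _, hk⟩ := hx
    exact hFnS k hk
  have hGmono : ∀ m n : ℕ, m ≤ n → G m ⊆ G n := by
    intro m n h
    rw [hG, hG]
    exact Finset.biUnion_subset_biUnion_of_subset_left _ (Finset.range_subset_range.2 (by omega))
  have hGd_lb : ∀ n, dstar - 1/(n+1) < d (G n) := by
    intro n
    refine lt_of_lt_of_le (hFnlt n) (hdmono _ _ ?_ (hGS n))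
    rw [hG]
    exact Finset.subset_biUnion_of_mem Fn (Finset.self_mem_range_succ n)
  -- choose near-optimal points
  have hv : ∀ n : ℕ, ∃ v ∈ K (G n), dist p v < d (G n) + 1/(n+1) := by
    intro n
    obtain ⟨v0, hv0, _⟩ := hKne _ (hGS n)
    have h1 : Metric.infDist p (K (G n)) < d (G n) + 1/(n+1) := by
      rw [← hd]; exact lt_add_of_pos_right _ (hE n)
    exact (Metric.infDist_lt_iff ⟨v0, hv0⟩).1 h1
  choose v hvK hvd using hv
  -- key estimate
  have key : ∀ n : ℕ, ∀ x y : H, x ∈ K (G n) → y ∈ K (G n) →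
      dist p x ≤ dstar + 1/(n+1) → dist p y ≤ dstar + 1/(n+1) →
      ‖x - y‖^2 ≤ 8 * (2*dstar + 1) * (1/(n+1)) := by
    intro n x y hx hy hdx hdy
    have hEn := hE n
    have hE1n := hE1 n
    have hmid : (1/2 : ℝ) • x + (1/2 : ℝ) • y ∈ K (G n) :=
      hKconv (G n) hx hy (by norm_num) (by norm_num) (by norm_num)
    have hmidd : d (G n) ≤ dist p ((1/2:ℝ) • x + (1/2:ℝ) • y) := by
      rw [hd]
      exact Metric.infDist_le_dist_of_mem hmid
    have hab : ((1/2:ℝ) • x + (1/2:ℝ) • y) - p = (1/2 : ℝ) • ((x - p) + (y - p)) := by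
      rw [smul_add]
      module
    have hdistmid : dist p ((1/2:ℝ) • x + (1/2:ℝ) • y) = (1/2) * ‖(x - p) + (y - p)‖ := by
      rw [dist_eq_norm', hab, norm_smul]
      norm_num
    have hsum_ge : 2 * d (G n) ≤ ‖(x - p) + (y - p)‖ := by
      rw [hdistmid] at hmidd; linarith
    have hpar : ‖(x - p) - (y - p)‖^2 + ‖(x - p) + (y - p)‖^2
        = 2*‖x - p‖^2 + 2*‖y - p‖^2 := by
      have h1 := norm_add_sq_real (x - p) (y - p)
      have h2 := norm_sub_sq_real (x - p) (y - p)
      linarith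
    have hxy : x - y = (x - p) - (y - p) := by abel
    have hax : ‖x - p‖ ≤ dstar + 1/(n+1) := by rw [← dist_eq_norm']; exact hdx
    have hay : ‖y - p‖ ≤ dstar + 1/(n+1) := by rw [← dist_eq_norm']; exact hdy
    have hsq_a : ‖x - p‖^2 ≤ (dstar + 1/(n+1))^2 := by nlinarith [norm_nonneg (x - p)]
    have hsq_b : ‖y - p‖^2 ≤ (dstar + 1/(n+1))^2 := by nlinarith [norm_nonneg (y - p)]
    have hdG0 : 0 ≤ d (G n) := hdnonneg _
    have hsq_ab : 4 * d (G n)^2 ≤ ‖(x - p) + (y - p)‖^2 := by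
      nlinarith [hsum_ge, hdG0]
    have hlb := hGd_lb n
    have hub : d (G n) ≤ dstar := hdstar_le _ (hGS n)
    have h10 : dstar + 1/(n+1) - d (G n) ≤ 2*(1/(n+1)) := by linarith
    have h11 : dstar + 1/(n+1) + d (G n) ≤ 2*dstar + 1 := by linarith
    have h13 : (dstar + 1/(n+1) - d (G n)) * (dstar + 1/(n+1) + d (G n))
        ≤ 2*(1/(n+1)) * (2*dstar + 1) := by
      exact mul_le_mul h10 h11 (by linarith) (by linarith)
    have hexp : (dstar + 1/(n+1) - d (G n)) * (dstar + 1/(n+1) + d (G n))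
        = (dstar + 1/(n+1))^2 - d (G n)^2 := by ring
    rw [hxy]
    linarith [hpar, hsq_a, hsq_b, hsq_ab, h13, hexp]
  have hvbound : ∀ n : ℕ, dist p (v n) ≤ dstar + 1/(n+1) :=
    fun n => le_trans (hvd n).le (by
      have := hdstar_le _ (hGS n); linarith)
  have hvmem : ∀ m n : ℕ, n ≤ m → v m ∈ K (G n) :=
    fun m n h => hKanti _ _ (hGmono n m h) (hvK m)
  have hEmono : ∀ m n : ℕ, n ≤ m → (1:ℝ)/(m+1) ≤ 1/(n+1) := by
    intro m n h
    have hc : ((n:ℝ)+1) ≤ ((m:ℝ)+1) := by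
      have : (n:ℝ) ≤ (m:ℝ) := by exact_mod_cast h
      linarith
    exact one_div_le_one_div_of_le (by positivity) hc
  have hvbound' : ∀ m n : ℕ, n ≤ m → dist p (v m) ≤ dstar + 1/(n+1) :=
    fun m n h => le_trans (hvbound m) (by linarith [hEmono m n h])
  -- Cauchy sequence
  have hcauchy : CauchySeq v := by
    rw [Metric.cauchySeq_iff]
    intro ε hε
    obtain ⟨N, hN⟩ := exists_nat_gt (8*(2*dstar+1)/ε^2)
    refine ⟨N, fun m hm n hn => ?_⟩
    have hkey := key N (v m) (v n) (hvmem m N hm) (hvmem n N hn)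
      (hvbound' m N hm) (hvbound' n N hn)
    have hN1 : 8*(2*dstar+1) * (1/(N+1)) < ε^2 := by
      rw [div_lt_iff₀ (by positivity)] at hN
      have h8 : (0:ℝ) < (N:ℝ) + 1 := by positivity
      rw [mul_one_div, div_lt_iff₀ h8]
      have hh : 0 ≤ ε^2 := sq_nonneg ε
      have hmono := mul_le_mul_of_nonneg_left (show (N:ℝ) ≤ (N:ℝ)+1 by linarith) hh
      linarith [hN, hmono]
    have hlt : dist (v m) (v n) ^ 2 < ε ^ 2 := by
      rw [dist_eq_norm]; linarith
    exact lt_of_pow_lt_pow_left₀ 2 hε.le hlt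
  obtain ⟨vstar, hvstar⟩ := cauchySeq_tendsto_of_complete hcauchy
  refine ⟨vstar, fun s hs => ?_⟩
  by_contra hcon
  push_neg at hcon
  have hδpos : 0 < ‖vstar - c s‖ - r s := by linarith
  obtain ⟨δ, hδ⟩ : ∃ δ : ℝ, δ = ‖vstar - c s‖ - r s := ⟨_, rfl⟩
  rw [← hδ] at hδpos
  obtain ⟨N1, hN1⟩ := (Metric.tendsto_atTop.1 hvstar) (δ/4) (by positivity)
  obtain ⟨N2, hN2⟩ := exists_nat_gt (8*(2*dstar+1)/(δ/4)^2)
  obtain ⟨n, hnN1, hnN2⟩ : ∃ n : ℕ, N1 ≤ n ∧ N2 ≤ n :=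
    ⟨max N1 N2, le_max_left _ _, le_max_right _ _⟩
  have hinsS : ↑(insert s (G n)) ⊆ S := by
    rw [Finset.coe_insert]
    exact Set.insert_subset hs (hGS n)
  obtain ⟨w0, hw0, _⟩ := hKne _ hinsS
  have hwlt : Metric.infDist p (K (insert s (G n))) < d (insert s (G n)) + 1/(n+1) := by
    rw [← hd]; exact lt_add_of_pos_right _ (hE n)
  obtain ⟨wn, hwnK, hwnd⟩ := (Metric.infDist_lt_iff ⟨w0, hw0⟩).1 hwlt
  have hwn_in : wn ∈ K (G n) := hKanti _ _ (Finset.subset_insert _ _) hwnK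
  have hwn_bound : dist p wn ≤ dstar + 1/(n+1) := by
    have := hdstar_le _ hinsS
    linarith
  have hkey := key n (v n) wn (hvK n) hwn_in (hvbound n) hwn_bound
  have hsq : ‖v n - wn‖^2 < (δ/4)^2 := by
    have h8 : (0:ℝ) < (n:ℝ) + 1 := by positivity
    have hcast : (N2:ℝ) ≤ (n:ℝ) := by exact_mod_cast hnN2
    have hlt2 : 8*(2*dstar+1) * (1/(n+1)) < (δ/4)^2 := by
      rw [div_lt_iff₀ (by positivity)] at hN2
      rw [mul_one_div, div_lt_iff₀ h8]
      have hh : 0 ≤ (δ/4)^2 := sq_nonneg _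
      have hmono := mul_le_mul_of_nonneg_left
        (show (N2:ℝ) ≤ (n:ℝ)+1 by linarith) hh
      linarith [hN2, hmono]
    linarith
  have hvw : ‖v n - wn‖ < δ/4 := lt_of_pow_lt_pow_left₀ 2 (by positivity) hsq
  have hdist1 : dist (v n) vstar < δ/4 := hN1 n hnN1
  have hwn_ball : ‖wn - c s‖ ≤ r s := by
    rw [hKmem] at hwnK
    exact hwnK s (Finset.mem_insert_self _ _)
  have htri : ‖vstar - c s‖ ≤ ‖vstar - v n‖ + ‖v n - wn‖ + ‖wn - c s‖ := by
    calc ‖vstar - c s‖ = ‖(vstar - v n) + ((v n - wn) + (wn - c s))‖ := by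
          congr 1; abel
      _ ≤ ‖vstar - v n‖ + ‖(v n - wn) + (wn - c s)‖ := norm_add_le _ _
      _ ≤ ‖vstar - v n‖ + (‖v n - wn‖ + ‖wn - c s‖) := by
          linarith [norm_add_le (v n - wn) (wn - c s)]
      _ = ‖vstar - v n‖ + ‖v n - wn‖ + ‖wn - c s‖ := by ring
  have hd1 : ‖vstar - v n‖ < δ/4 := by
    rw [← dist_eq_norm, dist_comm]
    exact hdist1
  linarith

end AuxKirszbraun

/-- For an `α`-comonotone operator `A` and `γ > 0` with `γ + α > 0`, the resolvent
`J_{γA} = (Id + γA)⁻¹` has full domain iff `A` is maximally `α`-comonotone. -/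
theorem resolvent_fullDomain_iff_maximallyComonotone {H : Type*} [NormedAddCommGroup H]
    [InnerProductSpace ℝ H] [CompleteSpace H] (A : H → Set H) (α γ : ℝ)
    (hγ : 0 < γ) (hγα : 0 < γ + α)
    (hA : ∀ x u y v, u ∈ A x → v ∈ A y → ⟪x - y, u - v⟫_ℝ ≥ α * ‖u - v‖ ^ 2) :
    (∀ z : H, ∃ x : H, z - x ∈ γ • A x) ↔
    (∀ A' : H → Set H,
      (∀ x u y v, u ∈ A' x → v ∈ A' y → ⟪x - y, u - v⟫_ℝ ≥ α * ‖u - v‖ ^ 2) →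
      (∀ x, A x ⊆ A' x) → ∀ x, A' x = A x) := by
  classical
  -- a small algebraic lemma used repeatedly
  have cancel : ∀ x u y v : H, u ∈ A x → v ∈ A y → x + γ • u = y + γ • v →
      u = v ∧ x = y := by
    intro x u y v hu hv heq
    have hco := hA x u y v hu hv
    have hxx : x - y = γ • v - γ • u := by
      have : x + γ • u - (y + γ • v) = 0 := by rw [heq]; abel
      have h2 : x - y = (x + γ • u - (y + γ • v)) + (γ • v - γ • u) := by abel
      rw [h2, this]; abel
    have hxx' : x - y = γ • (v - u) := by rw [hxx, smul_sub]
    have hinner : ⟪x - y, u - v⟫_ℝ = -(γ * ‖u - v‖^2) := by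
      rw [hxx', real_inner_smul_left, ← neg_sub u v, inner_neg_left,
        real_inner_self_eq_norm_sq]
      ring
    have hQ : 0 ≤ ‖u - v‖^2 := sq_nonneg _
    have hQ0 : ‖u - v‖^2 ≤ 0 := by nlinarith [hco, hinner]
    have huv : u - v = 0 := by
      have h3 : ‖u - v‖^2 = 0 := le_antisymm hQ0 hQ
      have h4 : ‖u - v‖ = 0 := by
        have := sq_eq_zero_iff.1 h3
        exact this
      exact norm_eq_zero.1 h4
    have huv' : u = v := sub_eq_zero.1 huv
    refine ⟨huv', ?_⟩
    have : x - y = 0 := by rw [hxx', huv', sub_self, smul_zero]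
    exact sub_eq_zero.1 this
  constructor
  · -- full domain → maximal
    intro hdom A' hA' hsub x
    refine Set.Subset.antisymm (fun u hu => ?_) (hsub x)
    obtain ⟨x₀, hx₀⟩ := hdom (x + γ • u)
    obtain ⟨u₀, hu₀, hequ⟩ := Set.mem_smul_set.1 hx₀
    -- hequ : γ • u₀ = x + γ • u - x₀
    have heq : x + γ • u = x₀ + γ • u₀ := by rw [hequ]; abel
    -- apply `cancel` within A'
    have hco := hA' x u x₀ u₀ hu (hsub x₀ hu₀)
    have hxx : x - x₀ = γ • (u₀ - u) := by
      have h2 : x - x₀ = (x + γ • u - (x₀ + γ • u₀)) + (γ • u₀ - γ • u) := by abel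
      rw [heq] at h2
      rw [h2, smul_sub]
      abel
    have hinner : ⟪x - x₀, u - u₀⟫_ℝ = -(γ * ‖u - u₀‖^2) := by
      rw [hxx, real_inner_smul_left, ← neg_sub u u₀, inner_neg_left,
        real_inner_self_eq_norm_sq]
      ring
    have hQ : 0 ≤ ‖u - u₀‖^2 := sq_nonneg _
    have hQ0 : ‖u - u₀‖^2 ≤ 0 := by nlinarith [hco, hinner]
    have huu : u = u₀ := by
      have h3 : ‖u - u₀‖ = 0 := by
        have := sq_eq_zero_iff.1 (le_antisymm hQ0 hQ)
        exact this
      exact sub_eq_zero.1 (norm_eq_zero.1 h3)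
    have hxx0 : x = x₀ := by
      have : x - x₀ = 0 := by rw [hxx, huu, sub_self, smul_zero]
      exact sub_eq_zero.1 this
    rw [hxx0, huu]
    exact hu₀
  · -- maximal → full domain
    intro hmax z
    obtain ⟨β, hβ⟩ : ∃ β : ℝ, β = γ + α := ⟨_, rfl⟩
    have hβ0 : 0 < β := hβ ▸ hγα
    obtain ⟨L, hLdef⟩ : ∃ L : ℝ, L = 1/(2*β) := ⟨_, rfl⟩
    have hL0 : 0 < L := by rw [hLdef]; positivity
    obtain ⟨S, hS⟩ : ∃ S : Set H, S = {s : H | ∃ x u, u ∈ A x ∧ x + γ • u = s} :=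
      ⟨_, rfl⟩
    have hSmem : ∀ s : H, s ∈ S → ∃ x u, u ∈ A x ∧ x + γ • u = s := by
      intro s hs; rw [hS] at hs; exact hs
    choose! X U hXU hXUs using hSmem
    obtain ⟨c, hc⟩ : ∃ c : H → H, ∀ s, c s = U s + L • (z - s) := ⟨_, fun _ => rfl⟩
    -- cocoercivity on S
    have hcoco : ∀ s ∈ S, ∀ t ∈ S, β * ‖U s - U t‖^2 ≤ ⟪s - t, U s - U t⟫_ℝ := by
      intro s hs t ht
      have hco := hA (X s) (U s) (X t) (U t) (hXU s hs) (hXU t ht)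
      have h1 : s - t = (X s - X t) + γ • (U s - U t) := by
        have e1 := hXUs s hs
        have e2 := hXUs t ht
        calc s - t = (X s + γ • U s) - (X t + γ • U t) := by rw [e1, e2]
          _ = (X s - X t) + γ • (U s - U t) := by rw [smul_sub]; abel
      have h2 : ⟪s - t, U s - U t⟫_ℝ
          = ⟪X s - X t, U s - U t⟫_ℝ + γ * ‖U s - U t‖^2 := by
        rw [h1, inner_add_left, real_inner_smul_left, real_inner_self_eq_norm_sq]
      rw [h2, hβ]
      nlinarith [hco]
    -- Lipschitz bound for the centers
    have hlip : ∀ s ∈ S, ∀ t ∈ S, ‖c s - c t‖ ≤ L * ‖s - t‖ := by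
      intro s hs t ht
      have hcs : c s - c t = (U s - U t) - L • (s - t) := by
        rw [hc, hc]
        module
      have hnorm : ‖c s - c t‖^2 = ‖U s - U t‖^2 - 2*L*⟪U s - U t, s - t⟫_ℝ
          + L^2 * ‖s - t‖^2 := by
        rw [hcs, norm_sub_sq_real, real_inner_smul_right, norm_smul,
          Real.norm_eq_abs, abs_of_pos hL0, mul_pow]
        ring
      have hswap : ⟪U s - U t, s - t⟫_ℝ = ⟪s - t, U s - U t⟫_ℝ := real_inner_comm _ _
      have hcc := hcoco s hs t ht
      have h2Lβ : 2 * L * β = 1 := by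
        rw [hLdef]; field_simp
      have hsq : ‖c s - c t‖^2 ≤ (L * ‖s - t‖)^2 := by
        have hstep : 2*L*⟪U s - U t, s - t⟫_ℝ ≥ 2*L*(β * ‖U s - U t‖^2) := by
          rw [hswap]
          have := mul_le_mul_of_nonneg_left hcc (by positivity : (0:ℝ) ≤ 2*L)
          linarith
        have hid : 2*L*(β * ‖U s - U t‖^2) = ‖U s - U t‖^2 := by
          rw [← mul_assoc, h2Lβ]; ring
        rw [mul_pow]
        nlinarith [hnorm, hstep, hid]
      have := pow_le_pow_iff_left₀ (norm_nonneg (c s - c t))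
        (mul_nonneg hL0.le (norm_nonneg (s - t))) (two_ne_zero)
      exact this.1 hsq
    -- intersect the balls
    obtain ⟨w, hw⟩ := exists_ball_inter c (fun s => L * ‖z - s‖) S
      (fun F hFS => exists_ball_inter_finite L hL0.le z c F
        (fun s hs t ht => hlip s (hFS hs) t (hFS ht)))
    -- key inequality for all graph points
    have hkey : ∀ y v, v ∈ A y → β * ‖w - v‖^2 ≤ ⟪z - (y + γ • v), w - v⟫_ℝ := by
      intro y v hv
      have hsS : y + γ • v ∈ S := by rw [hS]; exact ⟨y, v, hv, rfl⟩
      have hUv : U (y + γ • v) = v := by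
        obtain ⟨h1, h2⟩ := cancel (X (y + γ • v)) (U (y + γ • v)) y v
          (hXU _ hsS) hv (by rw [hXUs _ hsS])
        exact h1
      have hball := hw _ hsS
      have hexp : ‖w - c (y + γ • v)‖^2 = ‖w - v‖^2
          - 2*L*⟪w - v, z - (y + γ • v)⟫_ℝ + L^2 * ‖z - (y + γ • v)‖^2 := by
        have h3 : w - c (y + γ • v) = (w - v) - L • (z - (y + γ • v)) := by
          rw [hc, hUv]
          module
        rw [h3, norm_sub_sq_real, real_inner_smul_right, norm_smul,
          Real.norm_eq_abs, abs_of_pos hL0, mul_pow]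
        ring
      have hsq : ‖w - c (y + γ • v)‖^2 ≤ (L * ‖z - (y + γ • v)‖)^2 := by
        have h4 := pow_le_pow_left₀ (norm_nonneg _) hball 2
        exact h4
      rw [mul_pow] at hsq
      rw [hexp] at hsq
      -- ‖w-v‖² ≤ 2L⟪w-v, z-s⟫ ; multiply by β and use 2Lβ = 1
      have h2Lβ : 2 * L * β = 1 := by rw [hLdef]; field_simp
      have h5 : ‖w - v‖^2 ≤ 2*L*⟪w - v, z - (y + γ • v)⟫_ℝ := by linarith
      have h6 := mul_le_mul_of_nonneg_left h5 hβ0.le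
      calc β * ‖w - v‖^2 ≤ β * (2*L*⟪w - v, z - (y + γ • v)⟫_ℝ) := h6
        _ = (2*L*β) * ⟪w - v, z - (y + γ • v)⟫_ℝ := by ring
        _ = ⟪w - v, z - (y + γ • v)⟫_ℝ := by rw [h2Lβ]; ring
        _ = ⟪z - (y + γ • v), w - v⟫_ℝ := real_inner_comm _ _
    -- the mixed comonotonicity inequality
    have hmix : ∀ y v, v ∈ A y →
        ⟪(z - γ • w) - y, w - v⟫_ℝ ≥ α * ‖w - v‖^2 := by
      intro y v hv
      have h1 : (z - γ • w) - y = (z - (y + γ • v)) + γ • (v - w) := by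
        rw [smul_sub]; abel
      have h2 : ⟪(z - γ • w) - y, w - v⟫_ℝ
          = ⟪z - (y + γ • v), w - v⟫_ℝ - γ * ‖w - v‖^2 := by
        rw [h1, inner_add_left, real_inner_smul_left, ← neg_sub w v,
          inner_neg_left, real_inner_self_eq_norm_sq]
        ring
      have h3 := hkey y v hv
      rw [hβ] at h3
      rw [h2]
      linarith [h3]
    -- the extended operator
    obtain ⟨A', hA'def⟩ : ∃ A' : H → Set H,
        A' = fun x => A x ∪ {u | x = z - γ • w ∧ u = w} := ⟨_, rfl⟩
    have hA'mem : ∀ x u, u ∈ A' x ↔ (u ∈ A x ∨ (x = z - γ • w ∧ u = w)) := by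
      intro x u; rw [hA'def]; rfl
    have hA'co : ∀ x u y v, u ∈ A' x → v ∈ A' y →
        ⟪x - y, u - v⟫_ℝ ≥ α * ‖u - v‖ ^ 2 := by
      intro x u y v hu hv
      rw [hA'mem] at hu hv
      rcases hu with hu | ⟨hx1, hu1⟩ <;> rcases hv with hv | ⟨hy2, hv2⟩
      · exact hA x u y v hu hv
      · -- v = w new, u old
        rw [hy2, hv2]
        have := hmix x u hu
        have hflip : ⟪x - (z - γ • w), u - w⟫_ℝ = ⟪(z - γ • w) - x, w - u⟫_ℝ := by
          rw [← neg_sub (z - γ • w) x, ← neg_sub w u, inner_neg_neg]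
        rw [hflip, norm_sub_rev u w]
        exact this
      · -- u = w new, v old
        rw [hx1, hu1]
        exact hmix y v hv
      · rw [hx1, hu1, hy2, hv2]
        simp
    have hsub : ∀ x, A x ⊆ A' x := by
      intro x
      rw [hA'def]
      exact Set.subset_union_left
    have heq := hmax A' hA'co hsub (z - γ • w)
    have hwmem : w ∈ A (z - γ • w) := by
      rw [← heq, hA'mem]
      exact Or.inr ⟨rfl, rfl⟩
    refine ⟨z - γ • w, ?_⟩
    have : z - (z - γ • w) = γ • w := by abel
    rw [this]
    exact Set.smul_mem_smul_set hwmem
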